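/- (Conditional mean of the D-ZeroSARAH estimator.) Fix x, x' ∈ ℝ^d, v' ∈ ℝ^d, vectors y_{i,j} ∈ ℝ^d (1 ≤ i ≤ n, 1 ≤ j ≤ m), λ ∈ ℝ, 1 ≤ s ≤ n and 1 ≤ b ≤ m. Then the D-ZeroSARAH gradient estimator satisfies E_{S,{I_i}}[v(S,{I_i}) − ∇f(x)] = (1 − λ)(v' − ∇f(x')). -/

import Mathlib

noncomputable section

open Finset in
private lemma card_pcs_filter_mem {α : Type*} [Fintype α] [DecidableEq α] (a : α) (k : ℕ)
    (hk : 1 ≤ k) :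
    ((powersetCard k (univ : Finset α)).filter (fun S => a ∈ S)).card
      = (Fintype.card α - 1).choose (k - 1) := by
  have : ((powersetCard k (univ : Finset α)).filter (fun S => a ∈ S)).card
      = (powersetCard (k-1) ((univ : Finset α).erase a)).card := by
    refine Finset.card_bij' (fun S _ => S.erase a) (fun T _ => insert a T) ?_ ?_ ?_ ?_
    · intro S hS
      simp only [mem_filter, mem_powersetCard] at hS
      simp only [mem_powersetCard]
      exact ⟨Finset.erase_subset_erase _ hS.1.1, by rw [card_erase_of_mem hS.2, hS.1.2]⟩
    · intro T hT
      simp only [mem_powersetCard] at hT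
      have ha : a ∉ T := fun h => (mem_erase.mp (hT.1 h)).1 rfl
      simp only [mem_filter, mem_powersetCard, mem_insert, true_or, and_true]
      exact ⟨subset_univ _, by rw [card_insert_of_notMem ha, hT.2]; omega⟩
    · intro S hS
      simp only [mem_filter] at hS
      exact insert_erase hS.2
    · intro T hT
      simp only [mem_powersetCard] at hT
      have ha : a ∉ T := fun h => (mem_erase.mp (hT.1 h)).1 rfl
      exact erase_insert ha
  rw [this, card_powersetCard, card_erase_of_mem (mem_univ a), card_univ]

open Finset in
private lemma sum_sum_mem_card {V : Type*} [AddCommMonoid V] {β α : Type*} [Fintype α]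
    [DecidableEq α] [DecidableEq β]
    (G : Finset β) (e : β → Finset α) (w : α → V) :
    ∑ σ ∈ G, ∑ a ∈ e σ, w a
      = ∑ a, ((G.filter (fun σ => a ∈ e σ)).card) • w a := by
  classical
  have h1 : ∀ σ ∈ G, ∑ a ∈ e σ, w a = ∑ a : α, if a ∈ e σ then w a else 0 := by
    intro σ _
    rw [← Finset.sum_filter]
    apply Finset.sum_congr _ (fun _ _ => rfl)
    ext a; simp
  rw [Finset.sum_congr rfl h1, Finset.sum_comm]
  refine Finset.sum_congr rfl (fun a _ => ?_)
  rw [← Finset.sum_filter, Finset.sum_const]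

open Finset in
private lemma T_eq_piFinset (n m b : ℕ) :
    (univ.filter (fun σ : Fin n → Finset (Fin m) => ∀ i, (σ i).card = b))
      = Fintype.piFinset (fun _ : Fin n => powersetCard b (univ : Finset (Fin m))) := by
  ext σ
  simp [Fintype.mem_piFinset, mem_powersetCard]

open Finset in
private lemma T_card (n m b : ℕ) :
    (univ.filter (fun σ : Fin n → Finset (Fin m) => ∀ i, (σ i).card = b)).card
      = (m.choose b)^n := by
  rw [T_eq_piFinset, Fintype.card_piFinset]
  simp [card_powersetCard]

open Finset in
private lemma Tj_card (n m b : ℕ) (hb : 1 ≤ b) (i₀ : Fin n) (j : Fin m) :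
    ((univ.filter (fun σ : Fin n → Finset (Fin m) => ∀ i, (σ i).card = b)).filter
      (fun σ => j ∈ σ i₀)).card
      = (m-1).choose (b-1) * (m.choose b)^(n-1) := by
  classical
  rw [T_eq_piFinset]
  have ht : ((powersetCard b (univ : Finset (Fin m))).filter (fun t => j ∈ t))
      ⊆ powersetCard b (univ : Finset (Fin m)) := filter_subset _ _
  have := Fintype.piFinset_update_eq_filter_piFinset_mem
    (fun _ : Fin n => powersetCard b (univ : Finset (Fin m))) i₀ ht
  have heq : (Fintype.piFinset (fun _ : Fin n => powersetCard b (univ : Finset (Fin m)))).filter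
      (fun σ => j ∈ σ i₀)
      = Fintype.piFinset (Function.update
          (fun _ : Fin n => powersetCard b (univ : Finset (Fin m))) i₀
          ((powersetCard b (univ : Finset (Fin m))).filter (fun t => j ∈ t))) := by
    rw [this]
    apply filter_congr
    intro σ hσ
    simp only [Fintype.mem_piFinset] at hσ
    simp [mem_filter, hσ i₀]
  rw [heq, Fintype.card_piFinset]
  have happ : ∀ x, ((Function.update (fun _ : Fin n => powersetCard b (univ : Finset (Fin m))) i₀
      ((powersetCard b (univ : Finset (Fin m))).filter (fun t => j ∈ t))) x).card
      = Function.update (fun _ : Fin n => (powersetCard b (univ : Finset (Fin m))).card) i₀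
        ((powersetCard b (univ : Finset (Fin m))).filter (fun t => j ∈ t)).card x :=
    fun x => Function.apply_update (fun (_ : Fin n) (s : Finset (Finset (Fin m))) => s.card)
      (fun _ : Fin n => powersetCard b (univ : Finset (Fin m))) i₀
      ((powersetCard b (univ : Finset (Fin m))).filter (fun t => j ∈ t)) x
  simp_rw [happ]
  rw [Finset.prod_update_of_mem (mem_univ i₀)]
  have hc : ((powersetCard b (univ : Finset (Fin m))).filter (fun t => j ∈ t)).card
      = (m-1).choose (b-1) := by
    have := card_pcs_filter_mem j b hb
    simpa [Fintype.card_fin] using this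
  rw [hc]
  simp only [card_powersetCard, card_univ, Fintype.card_fin, Finset.prod_const]
  congr 1
  rw [Finset.card_sdiff_of_subset (by simp), card_univ, Fintype.card_fin, card_singleton]

open Finset in
private lemma main_count {V : Type*} [AddCommGroup V] [Module ℝ V] (n m s b : ℕ)
    (hs1 : 1 ≤ s) (hb1 : 1 ≤ b) (z : Fin n → Fin m → V) :
    ∑ S ∈ powersetCard s (univ : Finset (Fin n)),
      ∑ σ ∈ univ.filter (fun σ : Fin n → Finset (Fin m) => ∀ i, (σ i).card = b),
        ∑ i ∈ S, ∑ j ∈ σ i, z i j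
    = ((n-1).choose (s-1) * ((m-1).choose (b-1) * (m.choose b)^(n-1))) •
        ∑ i, ∑ j, z i j := by
  classical
  have step1 : ∀ S ∈ powersetCard s (univ : Finset (Fin n)),
      ∑ σ ∈ univ.filter (fun σ : Fin n → Finset (Fin m) => ∀ i, (σ i).card = b),
        ∑ i ∈ S, ∑ j ∈ σ i, z i j
      = ∑ i ∈ S, ((m-1).choose (b-1) * (m.choose b)^(n-1)) • ∑ j, z i j := by
    intro S _
    rw [Finset.sum_comm]
    refine Finset.sum_congr rfl (fun i _ => ?_)
    rw [sum_sum_mem_card (univ.filter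
      (fun σ : Fin n → Finset (Fin m) => ∀ i', (σ i').card = b)) (fun σ => σ i) (z i)]
    rw [Finset.sum_congr rfl (fun (j : Fin m) _ => by rw [Tj_card n m b hb1 i j] :
      ∀ j ∈ (univ : Finset (Fin m)),
        ((univ.filter (fun σ : Fin n → Finset (Fin m) => ∀ i', (σ i').card = b)).filter
          (fun σ => j ∈ σ i)).card • z i j
        = ((m-1).choose (b-1) * (m.choose b)^(n-1)) • z i j)]
    rw [← Finset.smul_sum]
  rw [Finset.sum_congr rfl step1]
  rw [sum_sum_mem_card (powersetCard s (univ : Finset (Fin n))) (fun S => S)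
    (fun i => ((m-1).choose (b-1) * (m.choose b)^(n-1)) • ∑ j, z i j)]
  have hcS : ∀ i : Fin n,
      ((powersetCard s (univ : Finset (Fin n))).filter (fun S => i ∈ S)).card
        = (n-1).choose (s-1) := by
    intro i
    have := card_pcs_filter_mem i s hs1
    simpa [Fintype.card_fin] using this
  calc ∑ i, ((powersetCard s (univ : Finset (Fin n))).filter (fun S => i ∈ S)).card •
        ((m-1).choose (b-1) * (m.choose b)^(n-1)) • ∑ j, z i j
      = ∑ i, ((n-1).choose (s-1) * ((m-1).choose (b-1) * (m.choose b)^(n-1))) • ∑ j, z i j := by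
        refine Finset.sum_congr rfl (fun i _ => ?_)
        rw [hcS i, smul_smul]
    _ = _ := by rw [← Finset.smul_sum]

private lemma scalar_id (n m s b : ℕ) (hs1 : 1 ≤ s) (hsn : s ≤ n) (hb1 : 1 ≤ b) (hbm : b ≤ m) :
    ((n.choose s : ℝ) * ((m.choose b : ℝ))^n)⁻¹ * (((s : ℝ) * (b : ℝ))⁻¹ *
      (((n-1).choose (s-1) * ((m-1).choose (b-1) * (m.choose b)^(n-1)) : ℕ) : ℝ))
      = ((n : ℝ) * (m : ℝ))⁻¹ := by
  obtain ⟨n', rfl⟩ : ∃ n', n = n' + 1 := ⟨n - 1, by omega⟩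
  obtain ⟨s', rfl⟩ : ∃ s', s = s' + 1 := ⟨s - 1, by omega⟩
  obtain ⟨m', rfl⟩ : ∃ m', m = m' + 1 := ⟨m - 1, by omega⟩
  obtain ⟨b', rfl⟩ : ∃ b', b = b' + 1 := ⟨b - 1, by omega⟩
  have k1 : (s' + 1) * (n' + 1).choose (s' + 1) = (n' + 1) * n'.choose s' := by
    simpa [Nat.succ_eq_add_one, mul_comm] using (Nat.add_one_mul_choose_eq n' s').symm
  have k2 : (b' + 1) * (m' + 1).choose (b' + 1) = (m' + 1) * m'.choose b' := by
    simpa [Nat.succ_eq_add_one, mul_comm] using (Nat.add_one_mul_choose_eq m' b').symm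
  have key1 : ((s' : ℝ) + 1) * ((n' + 1).choose (s' + 1) : ℝ)
      = ((n' : ℝ) + 1) * (n'.choose s' : ℝ) := by exact_mod_cast congrArg Nat.cast k1
  have key2 : ((b' : ℝ) + 1) * ((m' + 1).choose (b' + 1) : ℝ)
      = ((m' : ℝ) + 1) * (m'.choose b' : ℝ) := by exact_mod_cast congrArg Nat.cast k2
  have hA : ((n' + 1).choose (s' + 1) : ℝ) ≠ 0 :=
    Nat.cast_ne_zero.mpr (Nat.choose_pos hsn).ne'
  have hB : ((m' + 1).choose (b' + 1) : ℝ) ≠ 0 :=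
    Nat.cast_ne_zero.mpr (Nat.choose_pos hbm).ne'
  simp only [Nat.add_sub_cancel]
  push_cast
  have hBn : ((m' + 1).choose (b' + 1) : ℝ)^(n' + 1)
      = ((m' + 1).choose (b' + 1) : ℝ)^n' * ((m' + 1).choose (b' + 1) : ℝ) := by ring
  rw [hBn]
  have hs : ((s' : ℝ) + 1) ≠ 0 := by positivity
  have hb : ((b' : ℝ) + 1) ≠ 0 := by positivity
  have hn : ((n' : ℝ) + 1) ≠ 0 := by positivity
  have hm : ((m' : ℝ) + 1) ≠ 0 := by positivity
  have hBn' : ((m' + 1).choose (b' + 1) : ℝ)^n' ≠ 0 := pow_ne_zero _ hB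
  have hA' : (n'.choose s' : ℝ)
      = ((s':ℝ)+1) * ((n'+1).choose (s'+1) : ℝ) / ((n':ℝ)+1) := by
    field_simp
    linarith [key1]
  have hB' : (m'.choose b' : ℝ)
      = ((b':ℝ)+1) * ((m'+1).choose (b'+1) : ℝ) / ((m':ℝ)+1) := by
    field_simp
    linarith [key2]
  rw [hA', hB']
  field_simp


/-- The global average function `f(x) = (1/(nm)) ∑ᵢ∑ⱼ f_{i,j}(x)`. -/
noncomputable def dAvgF {d n m : ℕ}
    (f : Fin n → Fin m → EuclideanSpace ℝ (Fin d) → ℝ) :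
    EuclideanSpace ℝ (Fin d) → ℝ :=
  fun z => ((n : ℝ) * (m : ℝ))⁻¹ * ∑ i, ∑ j, f i j z

/-- Expectation over a uniformly random size-`s` subset `S ⊆ {1,…,n}` together with,
independently for each client, a uniformly random size-`b` subset of `{1,…,m}`
(real-valued functional). -/
noncomputable def dExp (n m s b : ℕ)
    (g : Finset (Fin n) → (Fin n → Finset (Fin m)) → ℝ) : ℝ :=
  (∑ S ∈ Finset.powersetCard s (Finset.univ : Finset (Fin n)),
    ∑ σ ∈ Finset.univ.filter
      (fun σ : Fin n → Finset (Fin m) => ∀ i, (σ i).card = b), g S σ) /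
  (((Finset.powersetCard s (Finset.univ : Finset (Fin n))).card : ℝ) *
    ((Finset.univ.filter
      (fun σ : Fin n → Finset (Fin m) => ∀ i, (σ i).card = b)).card : ℝ))

/-- The D-ZeroSARAH gradient estimator. -/
noncomputable def dEst {d n m : ℕ}
    (f : Fin n → Fin m → EuclideanSpace ℝ (Fin d) → ℝ)
    (x x' v' : EuclideanSpace ℝ (Fin d))
    (y : Fin n → Fin m → EuclideanSpace ℝ (Fin d))
    (lam : ℝ) (s b : ℕ)
    (S : Finset (Fin n)) (σ : Fin n → Finset (Fin m)) : EuclideanSpace ℝ (Fin d) :=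
  ((s : ℝ) * (b : ℝ))⁻¹ •
      ∑ i ∈ S, ∑ j ∈ σ i, (gradient (f i j) x - gradient (f i j) x')
    + (1 - lam) • v'
    + lam • (((s : ℝ) * (b : ℝ))⁻¹ •
          ∑ i ∈ S, ∑ j ∈ σ i, (gradient (f i j) x' - y i j)
        + ((n : ℝ) * (m : ℝ))⁻¹ • ∑ i, ∑ j, y i j)

/-- Expectation over a uniformly random size-`s` subset `S ⊆ {1,…,n}` together with,
independently for each client, a uniformly random size-`b` subset of `{1,…,m}`
(vector-valued functional). -/
noncomputable def dExpV {d : ℕ} (n m s b : ℕ)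
    (g : Finset (Fin n) → (Fin n → Finset (Fin m)) → EuclideanSpace ℝ (Fin d)) :
    EuclideanSpace ℝ (Fin d) :=
  (((Finset.powersetCard s (Finset.univ : Finset (Fin n))).card : ℝ) *
    ((Finset.univ.filter
      (fun σ : Fin n → Finset (Fin m) => ∀ i, (σ i).card = b)).card : ℝ))⁻¹ •
    ∑ S ∈ Finset.powersetCard s (Finset.univ : Finset (Fin n)),
      ∑ σ ∈ Finset.univ.filter
        (fun σ : Fin n → Finset (Fin m) => ∀ i, (σ i).card = b), g S σ

open Finset in
private lemma grad_dAvgF {d n m : ℕ} (f : Fin n → Fin m → EuclideanSpace ℝ (Fin d) → ℝ)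
    (hdiff : ∀ i j, Differentiable ℝ (f i j)) (z : EuclideanSpace ℝ (Fin d)) :
    gradient (dAvgF f) z = ((n : ℝ) * (m : ℝ))⁻¹ • ∑ i, ∑ j, gradient (f i j) z := by
  have hd : ∀ (i : Fin n), DifferentiableAt ℝ (fun w => ∑ j, f i j w) z := by
    intro i
    exact DifferentiableAt.fun_sum (fun j _ => (hdiff i j) z)
  have hdsum : DifferentiableAt ℝ (fun w => ∑ i, ∑ j, f i j w) z :=
    DifferentiableAt.fun_sum (fun i _ => hd i)
  unfold dAvgF gradient
  rw [fderiv_const_mul hdsum]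
  rw [fderiv_fun_sum (fun i _ => hd i)]
  have : ∀ i ∈ (univ : Finset (Fin n)),
      fderiv ℝ (fun w => ∑ j, f i j w) z = ∑ j, fderiv ℝ (f i j) z := by
    intro i _
    exact fderiv_fun_sum (fun j _ => (hdiff i j) z)
  rw [Finset.sum_congr rfl this]
  simp only [map_smulₛₗ, map_sum, starRingEnd_apply, star_trivial]

open Finset in
private lemma dExpV_add {d n m : ℕ} (s b : ℕ)
    (g h : Finset (Fin n) → (Fin n → Finset (Fin m)) → EuclideanSpace ℝ (Fin d)) :
    dExpV n m s b (fun S σ => g S σ + h S σ) = dExpV n m s b g + dExpV n m s b h := by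
  unfold dExpV
  rw [← smul_add]
  congr 1
  rw [← Finset.sum_add_distrib]
  exact Finset.sum_congr rfl fun S _ => Finset.sum_add_distrib

open Finset in
private lemma dExpV_smul {d n m : ℕ} (s b : ℕ) (r : ℝ)
    (g : Finset (Fin n) → (Fin n → Finset (Fin m)) → EuclideanSpace ℝ (Fin d)) :
    dExpV n m s b (fun S σ => r • g S σ) = r • dExpV n m s b g := by
  unfold dExpV
  rw [smul_comm]
  congr 1
  rw [Finset.smul_sum]
  exact Finset.sum_congr rfl fun S _ => (Finset.smul_sum).symm

open Finset in
private lemma dExpV_const {d n m : ℕ} (s b : ℕ) (hsn : s ≤ n) (hbm : b ≤ m)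
    (c : EuclideanSpace ℝ (Fin d)) :
    dExpV n m s b (fun _ _ => c) = c := by
  unfold dExpV
  rw [Finset.sum_congr rfl (fun S _ => Finset.sum_const c), Finset.sum_const, smul_smul]
  rw [← Nat.cast_smul_eq_nsmul ℝ, smul_smul]
  have hP : ((powersetCard s (univ : Finset (Fin n))).card : ℝ) = (n.choose s : ℝ) := by
    rw [card_powersetCard, card_univ, Fintype.card_fin]
  have hT : ((univ.filter
      (fun σ : Fin n → Finset (Fin m) => ∀ i, (σ i).card = b)).card : ℝ)
      = ((m.choose b)^n : ℕ) := by rw [T_card]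
  have h1 : (n.choose s : ℝ) ≠ 0 := Nat.cast_ne_zero.mpr (Nat.choose_pos hsn).ne'
  have h2 : (((m.choose b)^n : ℕ) : ℝ) ≠ 0 :=
    Nat.cast_ne_zero.mpr (pow_ne_zero _ (Nat.choose_pos hbm).ne')
  rw [Nat.cast_mul, hP, hT]
  rw [inv_mul_cancel₀ (mul_ne_zero h1 h2), one_smul]

open Finset in
private lemma dExpV_avg {d n m : ℕ} (s b : ℕ)
    (hs1 : 1 ≤ s) (hsn : s ≤ n) (hb1 : 1 ≤ b) (hbm : b ≤ m)
    (z : Fin n → Fin m → EuclideanSpace ℝ (Fin d)) :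
    dExpV n m s b (fun S σ => ((s : ℝ) * (b : ℝ))⁻¹ • ∑ i ∈ S, ∑ j ∈ σ i, z i j)
      = ((n : ℝ) * (m : ℝ))⁻¹ • ∑ i, ∑ j, z i j := by
  unfold dExpV
  simp only [← Finset.smul_sum]
  rw [main_count n m s b hs1 hb1 z]
  rw [← Nat.cast_smul_eq_nsmul ℝ, smul_smul, smul_smul]
  have hP : ((powersetCard s (univ : Finset (Fin n))).card : ℝ) = (n.choose s : ℝ) := by
    rw [card_powersetCard, card_univ, Fintype.card_fin]
  have hT : ((univ.filter
      (fun σ : Fin n → Finset (Fin m) => ∀ i, (σ i).card = b)).card : ℝ)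
      = ((m.choose b : ℝ))^n := by rw [T_card]; push_cast; ring
  rw [hP, hT, mul_assoc, scalar_id n m s b hs1 hsn hb1 hbm]

/-- Conditional mean of the D-ZeroSARAH estimator. -/
theorem dzerosarah_estimator_mean {d n m : ℕ} (hd : 1 ≤ d) (hn : 1 ≤ n) (hm : 1 ≤ m)
    (f : Fin n → Fin m → EuclideanSpace ℝ (Fin d) → ℝ)
    (hdiff : ∀ i j, Differentiable ℝ (f i j))
    (x x' v' : EuclideanSpace ℝ (Fin d))
    (y : Fin n → Fin m → EuclideanSpace ℝ (Fin d))
    (lam : ℝ) (s b : ℕ) (hs1 : 1 ≤ s) (hsn : s ≤ n) (hb1 : 1 ≤ b) (hbm : b ≤ m) :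
    dExpV n m s b (fun S σ => dEst f x x' v' y lam s b S σ - gradient (dAvgF f) x)
      = (1 - lam) • (v' - gradient (dAvgF f) x') := by
  have hg : (fun S σ => dEst f x x' v' y lam s b S σ - gradient (dAvgF f) x)
      = fun (S : Finset (Fin n)) (σ : Fin n → Finset (Fin m)) =>
        (((s : ℝ) * (b : ℝ))⁻¹ •
            ∑ i ∈ S, ∑ j ∈ σ i, (gradient (f i j) x - gradient (f i j) x'))
        + (lam • (((s : ℝ) * (b : ℝ))⁻¹ •
              ∑ i ∈ S, ∑ j ∈ σ i, (gradient (f i j) x' - y i j))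
          + ((1 - lam) • v' + lam • (((n : ℝ) * (m : ℝ))⁻¹ • ∑ i, ∑ j, y i j)
            - gradient (dAvgF f) x)) := by
    funext S σ
    unfold dEst
    module
  rw [hg, dExpV_add, dExpV_avg s b hs1 hsn hb1 hbm, dExpV_add, dExpV_smul,
      dExpV_avg s b hs1 hsn hb1 hbm, dExpV_const s b hsn hbm]
  have h1 : ((n : ℝ) * (m : ℝ))⁻¹ •
        ∑ i, ∑ j, (gradient (f i j) x - gradient (f i j) x')
      = gradient (dAvgF f) x - gradient (dAvgF f) x' := by
    rw [grad_dAvgF f hdiff x, grad_dAvgF f hdiff x', ← smul_sub]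
    congr 1
    rw [← Finset.sum_sub_distrib]
    exact Finset.sum_congr rfl fun i _ => Finset.sum_sub_distrib _ _
  have h2 : ((n : ℝ) * (m : ℝ))⁻¹ •
        ∑ i, ∑ j, (gradient (f i j) x' - y i j)
      = gradient (dAvgF f) x' - ((n : ℝ) * (m : ℝ))⁻¹ • ∑ i, ∑ j, y i j := by
    rw [grad_dAvgF f hdiff x', ← smul_sub]
    congr 1
    rw [← Finset.sum_sub_distrib]
    exact Finset.sum_congr rfl fun i _ => Finset.sum_sub_distrib _ _
  rw [h1, h2]
  module
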